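/- Let μ be a probability measure on ℝ satisfying ∫ e^{εb²} μ(db) < ∞ for some ε > 0 and 0 < μ([0,∞)) < 1. Define for π ∈ (0,1) and t ≥ 0 the volatility σ(t,π) = (1-π)·E_{t,x(t,π)}[B 1_{B≥0}] - π·E_{t,x(t,π)}[B 1_{B<0}], where E_{t,x} denotes integration against μ_{t,x} and x(t,π) is the level-curve value with μ_{t,x(t,π)}([0,∞)) = π. Then for each fixed π, t ↦ σ(t,π) is non-increasing; it is strictly decreasing unless μ is a two-point distribution, in which case it is constant. -/

import Mathlib

open MeasureTheory Set

/-- The posterior probability that the drift lies in `S` under the tilted measure `μ_{t,x}`. -/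
noncomputable def tiltProb (μ : Measure ℝ) (t x : ℝ) (S : Set ℝ) : ℝ :=
  (∫ b in S, Real.exp (b * x - b ^ 2 * t / 2) ∂μ) /
  (∫ b, Real.exp (b * x - b ^ 2 * t / 2) ∂μ)

/-- The truncated posterior mean `E_{t,x}[B 1_S(B)]` under the tilted measure `μ_{t,x}`. -/
noncomputable def tiltMean (μ : Measure ℝ) (t x : ℝ) (S : Set ℝ) : ℝ :=
  (∫ b in S, b * Real.exp (b * x - b ^ 2 * t / 2) ∂μ) /
  (∫ b, Real.exp (b * x - b ^ 2 * t / 2) ∂μ)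

section Aux

variable {μ : Measure ℝ} [IsProbabilityMeasure μ] {ε : ℝ}

omit [IsProbabilityMeasure μ] in
lemma amgm (hε : 0 < ε) (x b : ℝ) : b * x ≤ x ^ 2 / (4 * ε) + ε * b ^ 2 := by
  have h : x ^ 2 / (4 * ε) + ε * b ^ 2 - b * x = (x - 2 * ε * b) ^ 2 / (4 * ε) := by
    field_simp; ring
  nlinarith [div_nonneg (sq_nonneg (x - 2 * ε * b)) (by linarith : (0:ℝ) ≤ 4 * ε)]

omit [IsProbabilityMeasure μ] in
lemma integrable_w (hε : 0 < ε) (hexp : Integrable (fun b => Real.exp (ε * b ^ 2)) μ)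
    (t x : ℝ) (ht : 0 ≤ t) :
    Integrable (fun b => Real.exp (b * x - b ^ 2 * t / 2)) μ := by
  refine (hexp.const_mul (Real.exp (x ^ 2 / (4 * ε)))).mono' ?_ (Filter.Eventually.of_forall ?_)
  · exact (Real.continuous_exp.comp (by continuity)).aestronglyMeasurable
  · intro b
    rw [Real.norm_eq_abs, abs_of_pos (Real.exp_pos _), ← Real.exp_add]
    apply Real.exp_le_exp.2
    nlinarith [amgm hε x b, mul_nonneg (sq_nonneg b) ht]

omit [IsProbabilityMeasure μ] in
lemma integrable_bw (hε : 0 < ε) (hexp : Integrable (fun b => Real.exp (ε * b ^ 2)) μ)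
    (t x : ℝ) (ht : 0 ≤ t) :
    Integrable (fun b => b * Real.exp (b * x - b ^ 2 * t / 2)) μ := by
  have hε2 : 0 < ε / 2 := by linarith
  refine (hexp.const_mul (Real.exp ((1 + |x|) ^ 2 / (4 * (ε/2))))).mono'
    ?_ (Filter.Eventually.of_forall ?_)
  · exact (continuous_id.mul (Real.continuous_exp.comp (by continuity))).aestronglyMeasurable
  · intro b
    rw [Real.norm_eq_abs, abs_mul, abs_of_pos (Real.exp_pos _), ← Real.exp_add]
    have h1 : |b| ≤ Real.exp |b| := by linarith [Real.add_one_le_exp |b|, abs_nonneg b]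
    calc |b| * Real.exp (b * x - b ^ 2 * t / 2)
        ≤ Real.exp |b| * Real.exp (b * x - b ^ 2 * t / 2) :=
          mul_le_mul_of_nonneg_right h1 (Real.exp_pos _).le
      _ = Real.exp (|b| + (b * x - b ^ 2 * t / 2)) := (Real.exp_add _ _).symm
      _ ≤ Real.exp ((1 + |x|) ^ 2 / (4 * (ε/2)) + ε * b ^ 2) := by
          apply Real.exp_le_exp.2
          have h2 : |b| * (1 + |x|) ≤ (1 + |x|) ^ 2 / (4 * (ε/2)) + (ε/2) * |b| ^ 2 :=
            amgm hε2 (1 + |x|) |b|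
          have h3 : b * x ≤ |b| * |x| := by
            calc b * x ≤ |b * x| := le_abs_self _
              _ = |b| * |x| := abs_mul b x
          have h4 : |b| ^ 2 = b ^ 2 := sq_abs b
          nlinarith [mul_nonneg (sq_nonneg b) ht]

omit [IsProbabilityMeasure μ] in
lemma Z_pos [IsProbabilityMeasure μ] (t x : ℝ)
    (hint : Integrable (fun b => Real.exp (b * x - b ^ 2 * t / 2)) μ) :
    0 < ∫ b, Real.exp (b * x - b ^ 2 * t / 2) ∂μ := by
  rw [integral_pos_iff_support_of_nonneg (fun b => (Real.exp_pos _).le) hint]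
  have : Function.support (fun b : ℝ => Real.exp (b * x - b ^ 2 * t / 2)) = univ := by
    ext b; simp [Function.mem_support, Real.exp_ne_zero]
  rw [this]
  simp

end Aux


lemma quad_fact {β γ α R u v : ℝ} (hβ : 0 < β) (hR2 : R ^ 2 = α ^ 2 + 4 * β * γ)
    (hv' : v * (2 * β) = α + R) (hu' : u * (2 * β) = α - R) (b : ℝ) :
    (u ≤ b → b ≤ v → 0 ≤ γ + α * b - β * b ^ 2) ∧
    (v ≤ b → u ≤ b → γ + α * b - β * b ^ 2 ≤ 0) ∧
    (b ≤ u → b ≤ v → γ + α * b - β * b ^ 2 ≤ 0) ∧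
    (γ + α * b - β * b ^ 2 = 0 → b = u ∨ b = v) := by
  have h2β : (2 * β) ≠ 0 := by positivity
  have hQid : 4 * β * (γ + α * b - β * b ^ 2)
      = ((2 * β) * b - u * (2 * β)) * (v * (2 * β) - (2 * β) * b) := by
    rw [hu', hv']; linear_combination -hR2
  refine ⟨?_, ?_, ?_, ?_⟩
  · intro h1 h2
    have h3 : 0 ≤ ((2 * β) * b - u * (2 * β)) * (v * (2 * β) - (2 * β) * b) :=
      mul_nonneg (by nlinarith) (by nlinarith)
    nlinarith
  · intro h1 h2
    have h3 : ((2 * β) * b - u * (2 * β)) * (v * (2 * β) - (2 * β) * b) ≤ 0 :=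
      mul_nonpos_iff.2 (Or.inl ⟨by nlinarith, by nlinarith⟩)
    nlinarith
  · intro h1 h2
    have h3 : ((2 * β) * b - u * (2 * β)) * (v * (2 * β) - (2 * β) * b) ≤ 0 :=
      mul_nonpos_iff.2 (Or.inr ⟨by nlinarith, by nlinarith⟩)
    nlinarith
  · intro h0
    have h4 : ((2 * β) * b - u * (2 * β)) * (v * (2 * β) - (2 * β) * b) = 0 := by
      rw [← hQid, h0]; ring
    rcases mul_eq_zero.1 h4 with h5 | h5
    · left
      have h6 : (2 * β) * (b - u) = 0 := by linarith
      rcases mul_eq_zero.1 h6 with h7 | h7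
      · exact absurd h7 h2β
      · linarith [sub_eq_zero.1 h7]
    · right
      have h6 : (2 * β) * (v - b) = 0 := by linarith
      rcases mul_eq_zero.1 h6 with h7 | h7
      · exact absurd h7 h2β
      · linarith [sub_eq_zero.1 h7]

lemma sign_key_le {Fb E b v : ℝ} (hF : 0 < Fb)
    (h : (b ≤ v ∧ 1 ≤ E) ∨ (v ≤ b ∧ E ≤ 1)) : (b - v) * (Fb * E - Fb) ≤ 0 := by
  rcases h with ⟨h1, h2⟩ | ⟨h1, h2⟩
  · nlinarith [mul_nonneg (mul_nonneg (sub_nonneg.2 h1) (sub_nonneg.2 h2)) hF.le]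
  · nlinarith [mul_nonneg (mul_nonneg (sub_nonneg.2 h1) (sub_nonneg.2 h2)) hF.le]

lemma sign_key_ge {Fb E b u : ℝ} (hF : 0 < Fb)
    (h : (b ≤ u ∧ E ≤ 1) ∨ (u ≤ b ∧ 1 ≤ E)) : 0 ≤ (b - u) * (Fb * E - Fb) := by
  rcases h with ⟨h1, h2⟩ | ⟨h1, h2⟩
  · nlinarith [mul_nonneg (mul_nonneg (sub_nonneg.2 h1) (sub_nonneg.2 h2)) hF.le]
  · nlinarith [mul_nonneg (mul_nonneg (sub_nonneg.2 h1) (sub_nonneg.2 h2)) hF.le]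

set_option maxHeartbeats 2000000 in
lemma core_compare (μ : Measure ℝ) [IsProbabilityMeasure μ]
    (hμ0 : 0 < μ (Set.Ici (0:ℝ))) (hμ1 : μ (Set.Ici (0:ℝ)) < 1)
    {ε : ℝ} (hε : 0 < ε) (hexp : Integrable (fun b => Real.exp (ε * b ^ 2)) μ)
    (s t xs xt : ℝ) (hs : 0 ≤ s) (hst : s < t) (π : ℝ) (hπ : π ∈ Set.Ioo (0:ℝ) 1)
    (hps : tiltProb μ s xs (Set.Ici 0) = π) (hpt : tiltProb μ t xt (Set.Ici 0) = π) :
    tiltMean μ t xt (Set.Ici 0) ≤ tiltMean μ s xs (Set.Ici 0) ∧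
    tiltMean μ s xs (Set.Iio 0) ≤ tiltMean μ t xt (Set.Iio 0) ∧
    ((tiltMean μ t xt (Set.Ici 0) = tiltMean μ s xs (Set.Ici 0) ∧
      tiltMean μ s xs (Set.Iio 0) = tiltMean μ t xt (Set.Iio 0)) →
      ∃ a₁ a₂ : ℝ, μ ({a₁, a₂} : Set ℝ) = 1) := by
  obtain ⟨hπ0, hπ1⟩ := hπ
  have ht0 : 0 ≤ t := hs.trans hst.le
  have iws := integrable_w hε hexp s xs hs
  have iwt := integrable_w hε hexp t xt ht0
  have ibws := integrable_bw hε hexp s xs hs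
  have ibwt := integrable_bw hε hexp t xt ht0
  have hZs : 0 < ∫ b, Real.exp (b * xs - b ^ 2 * s / 2) ∂μ := Z_pos s xs iws
  have hZt : 0 < ∫ b, Real.exp (b * xt - b ^ 2 * t / 2) ∂μ := Z_pos t xt iwt
  set Zs := ∫ b, Real.exp (b * xs - b ^ 2 * s / 2) ∂μ with hZsdef
  set Zt := ∫ b, Real.exp (b * xt - b ^ 2 * t / 2) ∂μ with hZtdef
  set F : ℝ → ℝ := fun b => Real.exp (b * xs - b ^ 2 * s / 2) / Zs with hFdef
  set G : ℝ → ℝ := fun b => Real.exp (b * xt - b ^ 2 * t / 2) / Zt with hGdef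
  have hFpos : ∀ b, 0 < F b := fun b => div_pos (Real.exp_pos _) hZs
  have hGpos : ∀ b, 0 < G b := fun b => div_pos (Real.exp_pos _) hZt
  have iF : Integrable F μ := iws.div_const Zs
  have iG : Integrable G μ := iwt.div_const Zt
  have ibF : Integrable (fun b => b * F b) μ := by
    have h := ibws.div_const Zs
    refine h.congr (Filter.Eventually.of_forall fun b => ?_)
    simp [hFdef, mul_div_assoc]
  have ibG : Integrable (fun b => b * G b) μ := by
    have h := ibwt.div_const Zt
    refine h.congr (Filter.Eventually.of_forall fun b => ?_)
    simp [hGdef, mul_div_assoc]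
  -- set integrals of the normalized densities
  have hFI : ∫ b in Set.Ici 0, F b ∂μ = π := by
    simp only [hFdef, integral_div]
    simpa [tiltProb] using hps
  have hGI : ∫ b in Set.Ici 0, G b ∂μ = π := by
    simp only [hGdef, integral_div]
    simpa [tiltProb] using hpt
  have hFtot : ∫ b, F b ∂μ = 1 := by
    simp only [hFdef, integral_div, ← hZsdef]
    exact div_self hZs.ne'
  have hGtot : ∫ b, G b ∂μ = 1 := by
    simp only [hGdef, integral_div, ← hZtdef]
    exact div_self hZt.ne'
  have hFIc : ∫ b in Set.Iio 0, F b ∂μ = 1 - π := by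
    have h := integral_add_compl (s := Set.Ici (0:ℝ)) measurableSet_Ici iF
    rw [compl_Ici] at h
    rw [hFI, hFtot] at h
    linarith
  have hGIc : ∫ b in Set.Iio 0, G b ∂μ = 1 - π := by
    have h := integral_add_compl (s := Set.Ici (0:ℝ)) measurableSet_Ici iG
    rw [compl_Ici] at h
    rw [hGI, hGtot] at h
    linarith
  -- relate tiltMean to the normalized integrals
  have hMF : tiltMean μ s xs (Set.Ici 0) = ∫ b in Set.Ici (0:ℝ), b * F b ∂μ := by
    simp only [tiltMean]
    rw [← hZsdef, ← integral_div]
    refine integral_congr_ae (Filter.Eventually.of_forall fun b => ?_)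
    simp only [hFdef]; ring
  have hMG : tiltMean μ t xt (Set.Ici 0) = ∫ b in Set.Ici (0:ℝ), b * G b ∂μ := by
    simp only [tiltMean]
    rw [← hZtdef, ← integral_div]
    refine integral_congr_ae (Filter.Eventually.of_forall fun b => ?_)
    simp only [hGdef]; ring
  have hMFc : tiltMean μ s xs (Set.Iio 0) = ∫ b in Set.Iio (0:ℝ), b * F b ∂μ := by
    simp only [tiltMean]
    rw [← hZsdef, ← integral_div]
    refine integral_congr_ae (Filter.Eventually.of_forall fun b => ?_)
    simp only [hFdef]; ring
  have hMGc : tiltMean μ t xt (Set.Iio 0) = ∫ b in Set.Iio (0:ℝ), b * G b ∂μ := by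
    simp only [tiltMean]
    rw [← hZtdef, ← integral_div]
    refine integral_congr_ae (Filter.Eventually.of_forall fun b => ?_)
    simp only [hGdef]; ring
  -- the likelihood ratio
  set α : ℝ := xt - xs with hαdef
  set β : ℝ := (t - s) / 2 with hβdef
  have hβ : 0 < β := by rw [hβdef]; linarith
  set γ : ℝ := Real.log (Zs / Zt) with hγdef
  have hGF : ∀ b, G b = F b * Real.exp (γ + α * b - β * b ^ 2) := by
    intro b
    have h1 : Real.exp γ = Zs / Zt := Real.exp_log (div_pos hZs hZt)
    have h2 : Real.exp (b * xt - b ^ 2 * t / 2)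
        = Real.exp (b * xs - b ^ 2 * s / 2) * Real.exp (α * b - β * b ^ 2) := by
      rw [← Real.exp_add]; congr 1; rw [hαdef, hβdef]; ring
    simp only [hGdef, hFdef]
    rw [h2, show γ + α * b - β * b ^ 2 = γ + (α * b - β * b ^ 2) by ring, Real.exp_add, h1]
    field_simp
  clear_value Zs Zt F G γ
  -- existence of points where the ratio is ≥ 1 on both sides
  have hμIio : 0 < μ (Set.Iio (0:ℝ)) := by
    rw [← compl_Ici, prob_compl_eq_one_sub measurableSet_Ici]
    exact tsub_pos_of_lt hμ1
  have exA : ∀ S : Set ℝ, MeasurableSet S → 0 < μ S →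
      (∫ b in S, F b ∂μ) = (∫ b in S, G b ∂μ) →
      ∃ b ∈ S, 0 ≤ γ + α * b - β * b ^ 2 := by
    intro S hS hSpos hint
    by_contra hcon
    push_neg at hcon
    have hlt : ∀ b ∈ S, G b < F b := by
      intro b hb
      rw [hGF b]
      have h1 : Real.exp (γ + α * b - β * b ^ 2) < 1 :=
        Real.exp_lt_one_iff.2 (hcon b hb)
      nlinarith [hFpos b]
    set φ : ℝ → ℝ := S.indicator (fun b => F b - G b) with hφdef
    have hφnn : ∀ b, 0 ≤ φ b := by
      intro b
      by_cases hb : b ∈ S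
      · simp only [hφdef, indicator_of_mem hb]
        linarith [hlt b hb]
      · simp [hφdef, indicator_of_notMem hb]
    have hφint : Integrable φ μ := (iF.sub iG).indicator hS
    have hφ0 : ∫ b, φ b ∂μ = 0 := by
      rw [hφdef, integral_indicator hS,
        integral_sub iF.integrableOn iG.integrableOn, hint]
      ring
    have hae := (integral_eq_zero_iff_of_nonneg hφnn hφint).1 hφ0
    have h2 : μ {b | φ b ≠ 0} = 0 := by
      simpa [Filter.EventuallyEq, ae_iff] using hae
    have hsub : S ⊆ {b | φ b ≠ 0} := by
      intro b hb
      simp only [mem_setOf_eq, hφdef, indicator_of_mem hb]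
      have := hlt b hb
      intro h; linarith [sub_eq_zero.1 h]
    exact absurd (measure_mono_null hsub h2) hSpos.ne'
  obtain ⟨b₂, hb₂S, hQb₂⟩ := exA (Set.Ici 0) measurableSet_Ici hμ0 (hFI.trans hGI.symm)
  obtain ⟨b₁, hb₁S, hQb₁⟩ := exA (Set.Iio 0) measurableSet_Iio hμIio (hFIc.trans hGIc.symm)
  have hb₂ : 0 ≤ b₂ := hb₂S
  have hb₁ : b₁ < 0 := hb₁S
  have hγ0 : 0 ≤ γ := by
    by_contra hγ
    push_neg at hγ
    have h1 : 0 < α * b₁ := by nlinarith [mul_nonneg hβ.le (sq_nonneg b₁)]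
    have h2 : 0 < α * b₂ := by nlinarith [mul_nonneg hβ.le (sq_nonneg b₂)]
    have hb₂' : 0 < b₂ := by
      rcases hb₂.lt_or_eq with h | h
      · exact h
      · exfalso; rw [← h] at h2; simp at h2
    nlinarith [mul_pos h1 h2, mul_neg_of_neg_of_pos hb₁ hb₂', sq_nonneg α]
  -- the roots of the quadratic
  have hD : 0 ≤ α ^ 2 + 4 * β * γ := by nlinarith [sq_nonneg α, mul_nonneg hβ.le hγ0]
  set R := Real.sqrt (α ^ 2 + 4 * β * γ) with hRdef
  have hR2 : R ^ 2 = α ^ 2 + 4 * β * γ := Real.sq_sqrt hD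
  have hRα : |α| ≤ R := by
    rw [hRdef, ← Real.sqrt_sq_eq_abs]
    exact Real.sqrt_le_sqrt (by nlinarith [mul_nonneg hβ.le hγ0])
  clear_value R
  have h2β : (2 * β) ≠ 0 := by positivity
  set v : ℝ := (α + R) / (2 * β) with hvdef
  set u : ℝ := (α - R) / (2 * β) with hudef
  have hv' : v * (2 * β) = α + R := div_mul_cancel₀ _ h2β
  have hu' : u * (2 * β) = α - R := div_mul_cancel₀ _ h2β
  have hv : 0 ≤ v := by
    rw [hvdef]
    apply div_nonneg _ (by linarith)
    linarith [neg_abs_le α]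
  have hu : u ≤ 0 := by
    rw [hudef, div_nonpos_iff]
    right
    constructor <;> linarith [le_abs_self α]
  clear_value u v
  have hquad := fun b => quad_fact hβ hR2 hv' hu' b
  have hQmid : ∀ b, u ≤ b → b ≤ v → 0 ≤ γ + α * b - β * b ^ 2 := fun b => (hquad b).1
  have hQright : ∀ b, v ≤ b → γ + α * b - β * b ^ 2 ≤ 0 :=
    fun b h => (hquad b).2.1 h ((hu.trans hv).trans h)
  have hQleft : ∀ b, b ≤ u → γ + α * b - β * b ^ 2 ≤ 0 :=
    fun b h => (hquad b).2.2.1 h (h.trans (hu.trans hv))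
  have hQzero : ∀ b, γ + α * b - β * b ^ 2 = 0 → b = u ∨ b = v := fun b => (hquad b).2.2.2
  -- pointwise sign facts
  have keyIci : ∀ b ∈ Set.Ici (0:ℝ), (b - v) * (G b - F b) ≤ 0 := by
    intro b hb
    have hb' : (0:ℝ) ≤ b := hb
    rw [hGF b]
    rcases le_total b v with h | h
    · exact sign_key_le (hFpos b) (Or.inl ⟨h, Real.one_le_exp (hQmid b (hu.trans hb') h)⟩)
    · exact sign_key_le (hFpos b) (Or.inr ⟨h, Real.exp_le_one_iff.2 (hQright b h)⟩)
  have keyIio : ∀ b ∈ Set.Iio (0:ℝ), 0 ≤ (b - u) * (G b - F b) := by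
    intro b hb
    have hb' : b < 0 := hb
    rw [hGF b]
    rcases le_total b u with h | h
    · exact sign_key_ge (hFpos b) (Or.inl ⟨h, Real.exp_le_one_iff.2 (hQleft b h)⟩)
    · exact sign_key_ge (hFpos b) (Or.inr ⟨h, Real.one_le_exp (hQmid b h (hb'.le.trans hv))⟩)
  -- integrability of the combined integrands, with explicit types
  have hIGF : ∀ (S : Set ℝ) (w : ℝ), MeasurableSet S →
      Integrable (fun b => (b - w) * (G b - F b)) (μ.restrict S) := by
    intro S w hS
    have h1 : Integrable (fun b => b * G b - b * F b) (μ.restrict S) :=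
      ibG.integrableOn.sub ibF.integrableOn
    have h2 : Integrable (fun b => w * G b - w * F b) (μ.restrict S) :=
      (iG.integrableOn.const_mul w).sub (iF.integrableOn.const_mul w)
    have h3 : Integrable (fun b => (b * G b - b * F b) - (w * G b - w * F b)) (μ.restrict S) :=
      h1.sub h2
    refine h3.congr (Filter.Eventually.of_forall fun b => ?_)
    ring
  have expandAll : ∀ (S : Set ℝ) (w : ℝ), MeasurableSet S →
      ∫ b in S, (b - w) * (G b - F b) ∂μ
      = ((∫ b in S, b * G b ∂μ) - (∫ b in S, b * F b ∂μ))
        - w * ((∫ b in S, G b ∂μ) - (∫ b in S, F b ∂μ)) := by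
    intro S w hS
    have h0 : ∫ b in S, (b - w) * (G b - F b) ∂μ
        = ∫ b in S, ((b * G b - b * F b) - (w * G b - w * F b)) ∂μ :=
      integral_congr_ae (Filter.Eventually.of_forall fun b => by ring)
    have h1 : Integrable (fun b => b * G b - b * F b) (μ.restrict S) :=
      ibG.integrableOn.sub ibF.integrableOn
    have h2 : Integrable (fun b => w * G b - w * F b) (μ.restrict S) :=
      (iG.integrableOn.const_mul w).sub (iF.integrableOn.const_mul w)
    rw [h0, integral_sub h1 h2, integral_sub ibG.integrableOn ibF.integrableOn,
      integral_sub (iG.integrableOn.const_mul w) (iF.integrableOn.const_mul w),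
      integral_const_mul, integral_const_mul]
    ring
  have expand1 := expandAll (Set.Ici 0) v measurableSet_Ici
  have expand2 := expandAll (Set.Iio 0) u measurableSet_Iio
  have int1 : ∫ b in Set.Ici (0:ℝ), (b - v) * (G b - F b) ∂μ ≤ 0 :=
    setIntegral_nonpos measurableSet_Ici keyIci
  have int2 : 0 ≤ ∫ b in Set.Iio (0:ℝ), (b - u) * (G b - F b) ∂μ :=
    setIntegral_nonneg measurableSet_Iio keyIio
  have ineq_p : tiltMean μ t xt (Set.Ici 0) ≤ tiltMean μ s xs (Set.Ici 0) := by
    rw [hMF, hMG]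
    rw [expand1, hGI, hFI] at int1
    linarith
  have ineq_m : tiltMean μ s xs (Set.Iio 0) ≤ tiltMean μ t xt (Set.Iio 0) := by
    rw [hMFc, hMGc]
    rw [expand2, hGIc, hFIc] at int2
    linarith
  refine ⟨ineq_p, ineq_m, ?_⟩
  rintro ⟨e1, e2⟩
  -- equality case: the measure is concentrated on {u, v}
  refine ⟨u, v, ?_⟩
  have zero1 : ∫ b in Set.Ici (0:ℝ), (b - v) * (G b - F b) ∂μ = 0 := by
    rw [expand1, hGI, hFI, ← hMF, ← hMG, e1]
    ring
  have zero2 : ∫ b in Set.Iio (0:ℝ), (b - u) * (G b - F b) ∂μ = 0 := by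
    rw [expand2, hGIc, hFIc, ← hMFc, ← hMGc, e2]
    ring
  have hint1 : Integrable (fun b => (v - b) * (G b - F b)) (μ.restrict (Set.Ici 0)) := by
    refine ((hIGF (Set.Ici 0) v measurableSet_Ici).neg).congr
      (Filter.Eventually.of_forall fun b => ?_)
    simp only [Pi.neg_apply]
    ring
  have hint2 : Integrable (fun b => (b - u) * (G b - F b)) (μ.restrict (Set.Iio 0)) :=
    hIGF (Set.Iio 0) u measurableSet_Iio
  have hnn1 : 0 ≤ᵐ[μ.restrict (Set.Ici 0)] fun b => (v - b) * (G b - F b) := by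
    rw [Filter.EventuallyLE, ae_restrict_iff' measurableSet_Ici]
    refine Filter.Eventually.of_forall fun b hb => ?_
    have h := keyIci b hb
    simp only [Pi.zero_apply]
    have h2 : (v - b) * (G b - F b) = -((b - v) * (G b - F b)) := by ring
    rw [h2]
    exact neg_nonneg.2 h
  have hnn2 : 0 ≤ᵐ[μ.restrict (Set.Iio 0)] fun b => (b - u) * (G b - F b) := by
    rw [Filter.EventuallyLE, ae_restrict_iff' measurableSet_Iio]
    refine Filter.Eventually.of_forall fun b hb => ?_
    simp only [Pi.zero_apply]
    exact keyIio b hb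
  have hz1 : ∫ b in Set.Ici (0:ℝ), (v - b) * (G b - F b) ∂μ = 0 := by
    have h1 : ∫ b in Set.Ici (0:ℝ), (v - b) * (G b - F b) ∂μ
        = ∫ b in Set.Ici (0:ℝ), -((b - v) * (G b - F b)) ∂μ :=
      integral_congr_ae (Filter.Eventually.of_forall fun b => by ring)
    rw [h1, integral_neg, zero1, neg_zero]
  have hae1 := (integral_eq_zero_iff_of_nonneg_ae hnn1 hint1).1 hz1
  have hae2 := (integral_eq_zero_iff_of_nonneg_ae hnn2 hint2).1 zero2
  rw [Filter.EventuallyEq, ae_restrict_iff' measurableSet_Ici] at hae1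
  rw [Filter.EventuallyEq, ae_restrict_iff' measurableSet_Iio] at hae2
  -- pointwise: vanishing forces b ∈ {u, v}
  have hpoint : ∀ b : ℝ, G b - F b = 0 → b = u ∨ b = v := by
    intro b h
    rw [hGF b] at h
    have h2 : F b * (Real.exp (γ + α * b - β * b ^ 2) - 1) = 0 := by linear_combination h
    rcases mul_eq_zero.1 h2 with h3 | h3
    · exact absurd h3 (hFpos b).ne'
    · have hE : Real.exp (γ + α * b - β * b ^ 2) = 1 := by linarith
      exact hQzero b ((Real.exp_eq_one_iff _).1 hE)
  have hae : ∀ᵐ b ∂μ, b ∈ ({u, v} : Set ℝ) := by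
    filter_upwards [hae1, hae2] with b h1 h2
    rcases le_or_gt 0 b with hb | hb
    · have h3 := h1 hb
      rcases mul_eq_zero.1 h3 with h4 | h4
      · right; simp [sub_eq_zero.1 h4]
      · rcases hpoint b h4 with h5 | h5
        · left; exact h5
        · right; exact h5
    · have h3 := h2 hb
      rcases mul_eq_zero.1 h3 with h4 | h4
      · left; simp [sub_eq_zero.1 h4]
      · rcases hpoint b h4 with h5 | h5
        · left; exact h5
        · right; exact h5
  have hcompl : μ ({u, v} : Set ℝ)ᶜ = 0 := by
    rw [ae_iff] at hae
    exact hae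
  exact (prob_compl_eq_zero_iff ((measurableSet_singleton v).insert u)).1 hcompl

lemma twopoint_mean (μ : Measure ℝ) [IsProbabilityMeasure μ]
    {ε : ℝ} (hε : 0 < ε) (hexp : Integrable (fun b => Real.exp (ε * b ^ 2)) μ)
    (a c : ℝ) (ha : 0 ≤ a) (hc : c < 0) (hpair : μ ({a, c} : Set ℝ) = 1)
    (t xx π : ℝ) (ht : 0 ≤ t) (hp : tiltProb μ t xx (Set.Ici 0) = π) :
    tiltMean μ t xx (Set.Ici 0) = π * a ∧ tiltMean μ t xx (Set.Iio 0) = (1 - π) * c := by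
  have hmset : MeasurableSet ({a, c} : Set ℝ) := (measurableSet_singleton c).insert a
  have hcompl : μ ({a, c} : Set ℝ)ᶜ = 0 := (prob_compl_eq_zero_iff hmset).2 hpair
  have haem : ∀ᵐ b ∂μ, b ∈ ({a, c} : Set ℝ) := by
    rw [ae_iff]
    exact hcompl
  have hca : c ≠ a := ne_of_lt (lt_of_lt_of_le hc ha)
  have hIci : (Set.Ici (0:ℝ)) =ᵐ[μ] ({a} : Set ℝ) := by
    rw [Filter.eventuallyEq_set]
    filter_upwards [haem] with b hb
    rcases hb with rfl | hb
    · simp [ha]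
    · simp only [mem_singleton_iff] at hb
      subst hb
      simp [not_le.2 hc, hca]
  have hIio : (Set.Iio (0:ℝ)) =ᵐ[μ] ({c} : Set ℝ) := by
    rw [Filter.eventuallyEq_set]
    filter_upwards [haem] with b hb
    rcases hb with rfl | hb
    · simp [not_lt.2 ha, hca.symm]
    · simp only [mem_singleton_iff] at hb
      subst hb
      simp [hc]
  have e1 : ∀ f : ℝ → ℝ, ∫ b in Set.Ici (0:ℝ), f b ∂μ = (μ {a}).toReal * f a := by
    intro f
    rw [setIntegral_congr_set hIci, integral_singleton]
    simp [mul_comm, Measure.real]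
  have e2 : ∀ f : ℝ → ℝ, ∫ b in Set.Iio (0:ℝ), f b ∂μ = (μ {c}).toReal * f c := by
    intro f
    rw [setIntegral_congr_set hIio, integral_singleton]
    simp [mul_comm, Measure.real]
  have iw := integrable_w hε hexp t xx ht
  have hZ : 0 < ∫ b, Real.exp (b * xx - b ^ 2 * t / 2) ∂μ := Z_pos t xx iw
  set Z := ∫ b, Real.exp (b * xx - b ^ 2 * t / 2) ∂μ with hZdef
  set p := (μ {a}).toReal with hpdef
  set r := (μ {c}).toReal with hrdef
  have etot : Z = p * Real.exp (a * xx - a ^ 2 * t / 2) + r * Real.exp (c * xx - c ^ 2 * t / 2) := by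
    rw [hZdef, ← integral_add_compl (s := Set.Ici (0:ℝ)) measurableSet_Ici iw, compl_Ici,
      e1 (fun b => Real.exp (b * xx - b ^ 2 * t / 2)), e2 (fun b => Real.exp (b * xx - b ^ 2 * t / 2))]
  have hp' : p * Real.exp (a * xx - a ^ 2 * t / 2) / Z = π := by
    rw [← hp]
    simp only [tiltProb, ← hZdef, e1 (fun b => Real.exp (b * xx - b ^ 2 * t / 2))]
  constructor
  · simp only [tiltMean, ← hZdef, e1 (fun b => b * Real.exp (b * xx - b ^ 2 * t / 2))]
    rw [show p * (a * Real.exp (a * xx - a ^ 2 * t / 2))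
        = a * (p * Real.exp (a * xx - a ^ 2 * t / 2)) by ring, mul_div_assoc, hp']
    ring
  · simp only [tiltMean, ← hZdef, e2 (fun b => b * Real.exp (b * xx - b ^ 2 * t / 2))]
    have hr' : r * Real.exp (c * xx - c ^ 2 * t / 2) / Z = 1 - π := by
      have h9 : r * Real.exp (c * xx - c ^ 2 * t / 2)
          = Z - p * Real.exp (a * xx - a ^ 2 * t / 2) := by linarith [etot]
      rw [h9, sub_div, div_self hZ.ne', hp']
    rw [show r * (c * Real.exp (c * xx - c ^ 2 * t / 2))
        = c * (r * Real.exp (c * xx - c ^ 2 * t / 2)) by ring, mul_div_assoc, hr']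
    ring

lemma pair_signs (μ : Measure ℝ) [IsProbabilityMeasure μ]
    (hμ0 : 0 < μ (Set.Ici (0:ℝ))) (hμ1 : μ (Set.Ici (0:ℝ)) < 1)
    (a₁ a₂ : ℝ) (hpair : μ ({a₁, a₂} : Set ℝ) = 1) :
    ∃ a c : ℝ, 0 ≤ a ∧ c < 0 ∧ μ ({a, c} : Set ℝ) = 1 := by
  have hmset : MeasurableSet ({a₁, a₂} : Set ℝ) := (measurableSet_singleton a₂).insert a₁
  have hcompl : μ ({a₁, a₂} : Set ℝ)ᶜ = 0 := (prob_compl_eq_zero_iff hmset).2 hpair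
  have hμIio : 0 < μ (Set.Iio (0:ℝ)) := by
    rw [← compl_Ici, prob_compl_eq_one_sub measurableSet_Ici]
    exact tsub_pos_of_lt hμ1
  rcases le_or_gt 0 a₁ with h1 | h1 <;> rcases le_or_gt 0 a₂ with h2 | h2
  · exfalso
    have hsub : Set.Iio (0:ℝ) ⊆ ({a₁, a₂} : Set ℝ)ᶜ := by
      intro b hb
      simp only [mem_compl_iff, mem_insert_iff, mem_singleton_iff, not_or]
      exact ⟨fun h => absurd (h ▸ hb) (not_lt.2 h1), fun h => absurd (h ▸ hb) (not_lt.2 h2)⟩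
    exact absurd (measure_mono_null hsub hcompl) hμIio.ne'
  · exact ⟨a₁, a₂, h1, h2, hpair⟩
  · exact ⟨a₂, a₁, h2, h1, by rwa [Set.pair_comm]⟩
  · exfalso
    have hsub : Set.Ici (0:ℝ) ⊆ ({a₁, a₂} : Set ℝ)ᶜ := by
      intro b hb
      simp only [mem_compl_iff, mem_insert_iff, mem_singleton_iff, not_or]
      exact ⟨fun h => absurd (h ▸ hb) (not_le.2 h1), fun h => absurd (h ▸ hb) (not_le.2 h2)⟩
    exact absurd (measure_mono_null hsub hcompl) hμ0.ne'

theorem stmt_6 (μ : Measure ℝ) [IsProbabilityMeasure μ]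
    (hμ0 : 0 < μ (Set.Ici (0:ℝ))) (hμ1 : μ (Set.Ici (0:ℝ)) < 1)
    (ε : ℝ) (hε : 0 < ε)
    (hexp : Integrable (fun b => Real.exp (ε * b ^ 2)) μ)
    (x : ℝ → ℝ → ℝ)
    (hx : ∀ t, 0 ≤ t → ∀ π ∈ Set.Ioo (0:ℝ) 1, tiltProb μ t (x t π) (Set.Ici 0) = π)
    (σ : ℝ → ℝ → ℝ)
    (hσ : ∀ t π, σ t π =
      (1 - π) * tiltMean μ t (x t π) (Set.Ici 0) - π * tiltMean μ t (x t π) (Set.Iio 0)) :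
    ∀ π ∈ Set.Ioo (0:ℝ) 1,
      AntitoneOn (fun t => σ t π) (Set.Ici 0) ∧
      ((¬ ∃ a₁ a₂ : ℝ, μ ({a₁, a₂} : Set ℝ) = 1) →
        StrictAntiOn (fun t => σ t π) (Set.Ici 0)) ∧
      ((∃ a₁ a₂ : ℝ, μ ({a₁, a₂} : Set ℝ) = 1) →
        ∀ t, 0 ≤ t → σ t π = σ 0 π) := by
  intro π hπ
  have hπ0 : 0 < π := hπ.1
  have hπ1 : π < 1 := hπ.2
  have key : ∀ s ∈ Set.Ici (0:ℝ), ∀ t ∈ Set.Ici (0:ℝ), s < t →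
      σ t π ≤ σ s π ∧ (σ t π = σ s π → ∃ a₁ a₂ : ℝ, μ ({a₁, a₂} : Set ℝ) = 1) := by
    intro s hs t ht hst
    obtain ⟨h1, h2, h3⟩ := core_compare μ hμ0 hμ1 hε hexp s t (x s π) (x t π) hs hst π hπ
      (hx s hs π hπ) (hx t ht π hπ)
    constructor
    · rw [hσ t π, hσ s π]
      nlinarith [mul_le_mul_of_nonneg_left h1 (by linarith : (0:ℝ) ≤ 1 - π),
        mul_le_mul_of_nonneg_left h2 hπ0.le]
    · intro he
      rw [hσ t π, hσ s π] at he
      apply h3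
      constructor
      · apply le_antisymm h1
        nlinarith [mul_nonneg hπ0.le (sub_nonneg.2 h2)]
      · apply le_antisymm h2
        nlinarith [mul_nonneg (by linarith : (0:ℝ) ≤ 1 - π) (sub_nonneg.2 h1)]
  refine ⟨?_, ?_, ?_⟩
  · intro s hs t ht hle
    rcases eq_or_lt_of_le hle with rfl | hlt
    · exact le_rfl
    · exact (key s hs t ht hlt).1
  · intro hnot s hs t ht hlt
    obtain ⟨hle, heq⟩ := key s hs t ht hlt
    exact lt_of_le_of_ne hle fun h => hnot (heq h)
  · rintro ⟨a₁, a₂, hpair⟩ t ht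
    obtain ⟨a, c, ha, hc, hpair'⟩ := pair_signs μ hμ0 hμ1 a₁ a₂ hpair
    obtain ⟨m1, m2⟩ := twopoint_mean μ hε hexp a c ha hc hpair' t (x t π) π ht (hx t ht π hπ)
    obtain ⟨m3, m4⟩ := twopoint_mean μ hε hexp a c ha hc hpair' 0 (x 0 π) π le_rfl
      (hx 0 le_rfl π hπ)
    rw [hσ t π, hσ 0 π, m1, m2, m3, m4]
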